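/- arXiv:2604.27482 — 5 statements merged into one kernel-verified Lean document; each statement's English description precedes it below -/
import Mathlib

section
/- For any complex d×d matrix σ with σ² = I, any nonzero real x, and any β > 0, setting κ = coth(β·|x|), the two-term LCU block equals the rescaled imaginary-time factor: (κ·I − sgn(x)·σ) / (κ + 1) = e^{−β·|x|} · Matrix.exp(−β·x·σ). -/
theorem exp_smul_involution {d : ℕ} (σ : Matrix (Fin d) (Fin d) ℂ)
    (hσ : σ ^ 2 = 1) (c : ℂ) :
    NormedSpace.exp (c • σ) =
      Complex.cosh c • (1 : Matrix (Fin d) (Fin d) ℂ) + Complex.sinh c • σ := by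
  rw [NormedSpace.exp_eq_tsum (𝕂 := ℂ)]
  refine HasSum.tsum_eq ?_
  refine HasSum.even_add_odd ?_ ?_
  · have h := (Complex.hasSum_cosh c).smul_const (1 : Matrix (Fin d) (Fin d) ℂ)
    convert h using 2 with n
    · rfl
    rw [smul_pow, pow_mul σ, hσ, one_pow, smul_smul]
    congr 1
    rw [pow_mul, div_eq_inv_mul]
  · have h := (Complex.hasSum_sinh c).smul_const σ
    convert h using 2 with n
    · rfl
    rw [smul_pow, pow_succ σ, pow_mul σ, hσ, one_pow, one_mul, smul_smul]
    congr 1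
    rw [pow_succ, pow_mul, div_eq_inv_mul]

/-- For any complex d×d matrix σ with σ² = I, any nonzero real x, and any β > 0,
setting `κ = coth(β·|x|) = cosh(β·|x|)/sinh(β·|x|)`, the two-term LCU block equals the rescaled
imaginary-time factor: `(κ·I − sgn(x)·σ)/(κ + 1) = e^{−β·|x|} · exp(−β·x·σ)`. -/
theorem lcu_block_eq_rescaled_ite_factor {d : ℕ} (σ : Matrix (Fin d) (Fin d) ℂ)
    (hσ : σ ^ 2 = 1) (x : ℝ) (hx : x ≠ 0) (β : ℝ) (hβ : 0 < β) :
    (((Real.cosh (β * |x|) / Real.sinh (β * |x|) + 1 : ℝ) : ℂ))⁻¹ •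
      (((Real.cosh (β * |x|) / Real.sinh (β * |x|) : ℝ) : ℂ) •
          (1 : Matrix (Fin d) (Fin d) ℂ) -
        ((x / |x| : ℝ) : ℂ) • σ) =
      ((Real.exp (-(β * |x|)) : ℝ) : ℂ) •
        NormedSpace.exp (((-(β * x) : ℝ) : ℂ) • σ) := by
  rw [exp_smul_involution σ hσ]
  have ht : 0 < β * |x| := mul_pos hβ (abs_pos.mpr hx)
  set t : ℝ := β * |x| with htdef
  have hsinh : Real.sinh t ≠ 0 := ne_of_gt (Real.sinh_pos_iff.mpr ht)
  have hexp : Real.exp t ≠ 0 := Real.exp_ne_zero t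
  have hcs : Real.cosh t + Real.sinh t = Real.exp t := Real.cosh_add_sinh t
  -- coefficient identities
  have h1 : ((Real.cosh t / Real.sinh t + 1 : ℝ) : ℂ)⁻¹ *
      ((Real.cosh t / Real.sinh t : ℝ) : ℂ) =
      ((Real.exp (-t) : ℝ) : ℂ) * ((Real.cosh t : ℝ) : ℂ) := by
    rw [← Complex.ofReal_inv, ← Complex.ofReal_mul, ← Complex.ofReal_mul]
    congr 1
    rw [Real.exp_neg]
    field_simp
    nlinarith [hcs]
  have h2 : ((Real.cosh t / Real.sinh t + 1 : ℝ) : ℂ)⁻¹ =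
      ((Real.exp (-t) : ℝ) : ℂ) * ((Real.sinh t : ℝ) : ℂ) := by
    rw [← Complex.ofReal_inv, ← Complex.ofReal_mul]
    congr 1
    rw [Real.exp_neg]
    field_simp
    linarith [hcs]
  -- compute cosh/sinh of the complex argument
  have hc : Complex.cosh ((-(β * x) : ℝ) : ℂ) = ((Real.cosh t : ℝ) : ℂ) := by
    rw [← Complex.ofReal_cosh]
    congr 1
    rw [Real.cosh_neg, htdef]
    rcases abs_choice x with h | h
    · rw [h]
    · rw [h]; rw [mul_neg, Real.cosh_neg]
  have hs : Complex.sinh ((-(β * x) : ℝ) : ℂ) =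
      -(((x / |x| : ℝ) : ℂ) * ((Real.sinh t : ℝ) : ℂ)) := by
    rw [← Complex.ofReal_sinh, ← Complex.ofReal_mul, ← Complex.ofReal_neg]
    congr 1
    rw [Real.sinh_neg, htdef]
    rcases lt_or_gt_of_ne hx with h | h
    · rw [abs_of_neg h]
      field_simp
      rw [Real.sinh_neg]
    · rw [abs_of_pos h]
      field_simp
  rw [hc, hs]
  rw [smul_sub, smul_add, smul_smul, smul_smul, smul_smul, smul_smul, h1, h2]
  rw [mul_neg, neg_smul, sub_eq_add_neg]
  ring_nf
end

section
/- For a commuting PUBO Hamiltonian H = Σ_{μ∈ι} x_μ σ_μ with W = Σ_μ |x_μ| and any β ≥ 0, the block-encoded operator M(β) = e^{−β·W} · Matrix.exp(−β·H) has operator norm at most 1. -/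
open scoped Matrix.Norms.L2Operator

/-- The ℓ²→ℓ² operator norm of a complex d×d matrix. -/
noncomputable def l2OpNorm {d : ℕ} (M : Matrix (Fin d) (Fin d) ℂ) : ℝ :=
  ‖LinearMap.toContinuousLinearMap (Matrix.toEuclideanLin M)‖

lemma my_norm_one_le {d : ℕ} : ‖(1 : Matrix (Fin d) (Fin d) ℂ)‖ ≤ 1 := by
  rw [Matrix.cstar_norm_def, map_one]
  exact ContinuousLinearMap.norm_id_le

lemma my_norm_exp_le {d : ℕ} (A : Matrix (Fin d) (Fin d) ℂ) :
    ‖NormedSpace.exp A‖ ≤ Real.exp ‖A‖ := by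
  haveI : CompleteSpace (Matrix (Fin d) (Fin d) ℂ) := FiniteDimensional.complete ℂ _
  have hpow : ∀ n : ℕ, ‖A ^ n‖ ≤ ‖A‖ ^ n := by
    intro n
    cases n with
    | zero => simpa using my_norm_one_le
    | succ m => exact norm_pow_le' A m.succ_pos
  have hterm : ∀ n : ℕ, ‖((Nat.factorial n : ℂ)⁻¹ • A ^ n)‖ ≤ ‖A‖ ^ n / (n.factorial : ℝ) := by
    intro n
    rw [norm_smul, norm_inv, Complex.norm_natCast, div_eq_inv_mul]
    exact mul_le_mul_of_nonneg_left (hpow n) (by positivity)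
  have hsum : Summable fun n : ℕ => ‖((Nat.factorial n : ℂ)⁻¹ • A ^ n)‖ :=
    Summable.of_nonneg_of_le (fun n => norm_nonneg _) hterm
      (Real.summable_pow_div_factorial ‖A‖)
  calc ‖NormedSpace.exp A‖ = ‖∑' n : ℕ, ((Nat.factorial n : ℂ)⁻¹ • A ^ n)‖ := by
        rw [NormedSpace.exp_eq_tsum ℂ]
    _ ≤ ∑' n : ℕ, ‖((Nat.factorial n : ℂ)⁻¹ • A ^ n)‖ := norm_tsum_le_tsum_norm hsum
    _ ≤ ∑' n : ℕ, ‖A‖ ^ n / (n.factorial : ℝ) :=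
        Summable.tsum_le_tsum hterm hsum (Real.summable_pow_div_factorial ‖A‖)
    _ = Real.exp ‖A‖ := by
        rw [Real.exp_eq_exp_ℝ, NormedSpace.exp_eq_tsum_div]

/-- For a commuting PUBO Hamiltonian `H = ∑ μ, x μ • σ μ` with
`W = ∑ μ, |x μ|` and any β ≥ 0, the block-encoded operator
`M(β) = e^{−β·W} · exp(−β·H)` has ℓ² operator norm at most 1. -/
theorem block_encoded_ite_contraction {d : ℕ} {ι : Type*} [Fintype ι] [Nonempty ι]
    (x : ι → ℝ) (hx : ∀ μ, x μ ≠ 0)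
    (σ : ι → Matrix (Fin d) (Fin d) ℂ)
    (hherm : ∀ μ, (σ μ).IsHermitian)
    (hcomm : ∀ μ ν, Commute (σ μ) (σ ν))
    (hinv : ∀ μ, σ μ ^ 2 = 1)
    (β : ℝ) (hβ : 0 ≤ β) :
    l2OpNorm (((Real.exp (-(β * ∑ μ, |x μ|)) : ℝ) : ℂ) •
        NormedSpace.exp ((-(β : ℂ)) • ∑ μ, (x μ : ℂ) • σ μ)) ≤ 1 := by
  have hdef : ∀ M : Matrix (Fin d) (Fin d) ℂ, l2OpNorm M = ‖M‖ := fun M => rfl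
  rw [hdef]
  -- norm bound on each σ μ
  have hσ : ∀ μ, ‖σ μ‖ ≤ 1 := by
    intro μ
    have hsq : ‖σ μ‖ * ‖σ μ‖ ≤ 1 := by
      have := CStarRing.norm_star_mul_self (x := σ μ)
      rw [show star (σ μ) = σ μ from (hherm μ).eq] at this
      calc ‖σ μ‖ * ‖σ μ‖ = ‖σ μ * σ μ‖ := this.symm
        _ = ‖(1 : Matrix (Fin d) (Fin d) ℂ)‖ := by rw [← pow_two, hinv μ]
        _ ≤ 1 := my_norm_one_le
    nlinarith [norm_nonneg (σ μ)]
  have hH : ‖∑ μ, (x μ : ℂ) • σ μ‖ ≤ ∑ μ, |x μ| := by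
    refine (norm_sum_le _ _).trans (Finset.sum_le_sum fun μ _ => ?_)
    rw [norm_smul, Complex.norm_real, Real.norm_eq_abs]
    calc |x μ| * ‖σ μ‖ ≤ |x μ| * 1 :=
          mul_le_mul_of_nonneg_left (hσ μ) (abs_nonneg _)
      _ = |x μ| := mul_one _
  set W := ∑ μ, |x μ| with hW
  have hA : ‖(-(β : ℂ)) • ∑ μ, (x μ : ℂ) • σ μ‖ ≤ β * W := by
    rw [norm_smul, norm_neg, Complex.norm_real, Real.norm_eq_abs, abs_of_nonneg hβ]
    exact mul_le_mul_of_nonneg_left hH hβ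
  calc ‖((Real.exp (-(β * W)) : ℝ) : ℂ) •
        NormedSpace.exp ((-(β : ℂ)) • ∑ μ, (x μ : ℂ) • σ μ)‖
      = Real.exp (-(β * W)) * ‖NormedSpace.exp ((-(β : ℂ)) • ∑ μ, (x μ : ℂ) • σ μ)‖ := by
        rw [norm_smul, Complex.norm_real, Real.norm_eq_abs, abs_of_pos (Real.exp_pos _)]
    _ ≤ Real.exp (-(β * W)) * Real.exp (β * W) := by
        refine mul_le_mul_of_nonneg_left ?_ (Real.exp_pos _).le
        exact (my_norm_exp_le _).trans (Real.exp_le_exp.mpr hA)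
    _ = 1 := by rw [← Real.exp_add, neg_add_cancel, Real.exp_zero]
end

section
/- (Corollary: gap bound on fidelity.) In the spectral setup, assume there exists an index k with E_k > E₀, and let Δ := min{E_k − E₀ : E_k > E₀} > 0 be the spectral gap. Then for every β ≥ 0, the fidelity satisfies F(β) ≥ γ₀ / (γ₀ + (1 − γ₀)·e^{−2βΔ}). -/
open Classical in
/-- LCU success probability `P(β) = e^{−2βW}·∑_k p_k·e^{−2βE_k}`. -/
noncomputable def Psucc {d : ℕ} (E p : Fin d → ℝ) (W β : ℝ) : ℝ :=
  Real.exp (-(2 * β * W)) * ∑ k, p k * Real.exp (-(2 * β * E k))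

open Classical in
/-- Ground overlap `γ₀ = ∑_{k : E_k = E₀} p_k`. -/
noncomputable def gammaZero {d : ℕ} (E p : Fin d → ℝ) (E₀ : ℝ) : ℝ :=
  ∑ k ∈ Finset.univ.filter fun k => E k = E₀, p k

open Classical in
/-- Ground-subspace fidelity `F(β) = γ₀·e^{−2βE₀} / ∑_k p_k·e^{−2βE_k}`. -/
noncomputable def Fid {d : ℕ} (E p : Fin d → ℝ) (E₀ β : ℝ) : ℝ :=
  gammaZero E p E₀ * Real.exp (-(2 * β * E₀)) /
    ∑ k, p k * Real.exp (-(2 * β * E k))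

/-- Corollary: gap bound on fidelity: in the spectral setup (energies `E`,
minimum `E₀`, weights `p` nonnegative summing to one), if some level lies strictly above
`E₀` and `Δ = min {E_k − E₀ : E_k > E₀} > 0` is the spectral gap, then for every `β ≥ 0`,
`F(β) ≥ γ₀ / (γ₀ + (1 − γ₀)·e^{−2βΔ})`. -/
theorem gap_bound_on_fidelity {d : ℕ} (hd : 1 ≤ d) (E p : Fin d → ℝ)
    (hp : ∀ k, 0 ≤ p k) (hpsum : ∑ k, p k = 1)
    (E₀ : ℝ) (hE₀le : ∀ k, E₀ ≤ E k) (hE₀mem : ∃ k, E k = E₀)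
    (hex : ∃ k, E₀ < E k)
    (Δ : ℝ) (hΔ : IsLeast ((fun k => E k - E₀) '' {k | E₀ < E k}) Δ) (hΔpos : 0 < Δ)
    (β : ℝ) (hβ : 0 ≤ β) :
    gammaZero E p E₀ /
        (gammaZero E p E₀ + (1 - gammaZero E p E₀) * Real.exp (-(2 * β * Δ))) ≤
      Fid E p E₀ β := by
  classical
  set γ := gammaZero E p E₀ with hγ
  set a := Real.exp (-(2 * β * E₀)) with ha
  set S := ∑ k, p k * Real.exp (-(2 * β * E k)) with hS
  have hapos : 0 < a := Real.exp_pos _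
  have hγ0 : 0 ≤ γ := Finset.sum_nonneg fun k _ => hp k
  have hγ1 : γ ≤ 1 := by
    rw [hγ, gammaZero, ← hpsum]
    exact Finset.sum_le_sum_of_subset_of_nonneg (Finset.filter_subset _ _)
      (fun k _ _ => hp k)
  -- S > 0
  have hSpos : 0 < S := by
    have : ∃ k, 0 < p k := by
      by_contra h
      push_neg at h
      have : ∀ k, p k = 0 := fun k => le_antisymm (h k) (hp k)
      simp [this] at hpsum
    obtain ⟨k, hk⟩ := this
    have h1 : 0 < p k * Real.exp (-(2 * β * E k)) := mul_pos hk (Real.exp_pos _)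
    have h2 : p k * Real.exp (-(2 * β * E k)) ≤ S :=
      Finset.single_le_sum (f := fun j => p j * Real.exp (-(2 * β * E j)))
        (fun j _ => mul_nonneg (hp j) (Real.exp_pos _).le) (Finset.mem_univ k)
    linarith
  -- key bound: S ≤ a * (γ + (1-γ) * exp(-(2βΔ)))
  have hgap : ∀ k, ¬ E k = E₀ → E₀ + Δ ≤ E k := by
    intro k hk
    have hlt : E₀ < E k := lt_of_le_of_ne (hE₀le k) (Ne.symm hk)
    have := hΔ.2 ⟨k, hlt, rfl⟩
    simp only at this
    linarith
  have hrest : ∑ k ∈ Finset.univ.filter (fun k => ¬ E k = E₀), p k = 1 - γ := by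
    have := Finset.sum_filter_add_sum_filter_not Finset.univ
      (fun k => E k = E₀) p
    rw [hpsum] at this
    rw [hγ, gammaZero]; linarith
  have hbound : S ≤ a * (γ + (1 - γ) * Real.exp (-(2 * β * Δ))) := by
    rw [hS, ← Finset.sum_filter_add_sum_filter_not Finset.univ (fun k => E k = E₀)]
    have h1 : ∑ k ∈ Finset.univ.filter (fun k => E k = E₀),
        p k * Real.exp (-(2 * β * E k)) = γ * a := by
      rw [hγ, gammaZero, Finset.sum_mul]
      apply Finset.sum_congr rfl
      intro k hk
      rw [Finset.mem_filter] at hk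
      rw [hk.2, ha]
    have h2 : ∑ k ∈ Finset.univ.filter (fun k => ¬ E k = E₀),
        p k * Real.exp (-(2 * β * E k)) ≤ (1 - γ) * (a * Real.exp (-(2 * β * Δ))) := by
      rw [← hrest, Finset.sum_mul]
      apply Finset.sum_le_sum
      intro k hk
      rw [Finset.mem_filter] at hk
      apply mul_le_mul_of_nonneg_left _ (hp k)
      rw [ha, ← Real.exp_add]
      apply Real.exp_le_exp.mpr
      have := hgap k hk.2
      nlinarith
    nlinarith
  have hDpos : 0 < γ + (1 - γ) * Real.exp (-(2 * β * Δ)) := by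
    have he : 0 < Real.exp (-(2 * β * Δ)) := Real.exp_pos _
    have he1 : Real.exp (-(2 * β * Δ)) ≤ 1 := by
      apply Real.exp_le_one_iff.mpr; nlinarith
    nlinarith
  rw [Fid, ← hγ, ← ha, ← hS, div_le_div_iff₀ hDpos hSpos]
  calc γ * S ≤ γ * (a * (γ + (1 - γ) * Real.exp (-(2 * β * Δ)))) :=
        mul_le_mul_of_nonneg_left hbound hγ0
    _ = γ * a * (γ + (1 - γ) * Real.exp (-(2 * β * Δ))) := by ring
end

section
/- (Corollary: gap-based sufficient β for target fidelity.) In the spectral setup, assume there exists an index k with E_k > E₀, let Δ := min{E_k − E₀ : E_k > E₀} > 0, and assume 0 < γ₀ < 1 and γ₀ < F̄ < 1. If β ≥ (1/(2Δ)) · log( F̄·(1 − γ₀) / (γ₀·(1 − F̄)) ), then F(β) ≥ F̄. -/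
/-- Corollary: gap-based sufficient β for target fidelity: in the spectral
setup, with some level strictly above `E₀`, spectral gap
`Δ = min {E_k − E₀ : E_k > E₀} > 0`, `0 < γ₀ < 1` and target fidelity `γ₀ < Fbar < 1`:
if `β ≥ (1/(2Δ))·log(Fbar·(1 − γ₀)/(γ₀·(1 − Fbar)))`, then `F(β) ≥ Fbar`. -/
theorem gap_based_sufficient_beta {d : ℕ} (hd : 1 ≤ d) (E p : Fin d → ℝ)
    (hp : ∀ k, 0 ≤ p k) (hpsum : ∑ k, p k = 1)
    (E₀ : ℝ) (hE₀le : ∀ k, E₀ ≤ E k) (hE₀mem : ∃ k, E k = E₀)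
    (hex : ∃ k, E₀ < E k)
    (Δ : ℝ) (hΔ : IsLeast ((fun k => E k - E₀) '' {k | E₀ < E k}) Δ) (hΔpos : 0 < Δ)
    (Fbar : ℝ) (hγpos : 0 < gammaZero E p E₀) (hγlt : gammaZero E p E₀ < 1)
    (hFbarlo : gammaZero E p E₀ < Fbar) (hFbarhi : Fbar < 1)
    (β : ℝ)
    (hβ : (1 / (2 * Δ)) *
        Real.log (Fbar * (1 - gammaZero E p E₀) / (gammaZero E p E₀ * (1 - Fbar))) ≤ β) :
    Fbar ≤ Fid E p E₀ β := by
  classical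
  set γ := gammaZero E p E₀ with hγdef
  have h2Δ : 0 < 2 * Δ := by linarith
  have hden : 0 < γ * (1 - Fbar) := by nlinarith
  have hnum : 0 < Fbar * (1 - γ) := by nlinarith
  have hR1 : γ * (1 - Fbar) ≤ Fbar * (1 - γ) := by nlinarith
  have hβ0 : 0 ≤ β := by
    refine le_trans (mul_nonneg (by positivity) ?_) hβ
    exact Real.log_nonneg ((one_le_div hden).2 hR1)
  have hlog : Real.log (Fbar * (1 - γ) / (γ * (1 - Fbar))) ≤ 2 * Δ * β := by
    have h := hβ
    rw [div_mul_eq_mul_div, one_mul, div_le_iff₀ h2Δ] at h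
    linarith
  have hx : Real.exp (-(2 * β * Δ)) ≤ γ * (1 - Fbar) / (Fbar * (1 - γ)) := by
    have heq : γ * (1 - Fbar) / (Fbar * (1 - γ))
        = (Fbar * (1 - γ) / (γ * (1 - Fbar)))⁻¹ := by rw [inv_div]
    rw [heq, ← Real.exp_log
        (show (0:ℝ) < (Fbar * (1 - γ) / (γ * (1 - Fbar)))⁻¹ by positivity),
      Real.log_inv]
    exact Real.exp_le_exp.2 (by linarith)
  set G := Finset.univ.filter fun k : Fin d => E k = E₀ with hG
  have hsplit : (∑ k, p k * Real.exp (-(2 * β * E k)))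
      = (∑ k ∈ G, p k * Real.exp (-(2 * β * E k)))
      + (∑ k ∈ Gᶜ, p k * Real.exp (-(2 * β * E k))) :=
    (Finset.sum_add_sum_compl G _).symm
  have hGsum : (∑ k ∈ G, p k * Real.exp (-(2 * β * E k)))
      = γ * Real.exp (-(2 * β * E₀)) := by
    rw [hγdef, gammaZero, Finset.sum_mul]
    refine Finset.sum_congr rfl fun k hk => ?_
    rw [(Finset.mem_filter.1 hk).2]
  have hγ1 : γ + (∑ k ∈ Gᶜ, p k) = 1 := by
    rw [hγdef, gammaZero, ← hpsum]
    exact Finset.sum_add_sum_compl G p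
  have hGc : (∑ k ∈ Gᶜ, p k * Real.exp (-(2 * β * E k)))
      ≤ (1 - γ) * (Real.exp (-(2 * β * E₀)) * Real.exp (-(2 * β * Δ))) := by
    have h1 : (1 - γ) = ∑ k ∈ Gᶜ, p k := by linarith
    rw [h1, Finset.sum_mul]
    refine Finset.sum_le_sum fun k hk => ?_
    have hkne : E k ≠ E₀ := by
      simpa [hG, Finset.mem_filter] using Finset.mem_compl.1 hk
    have hklt : E₀ < E k := lt_of_le_of_ne (hE₀le k) (Ne.symm hkne)
    have hΔk : Δ ≤ E k - E₀ := hΔ.2 ⟨k, hklt, rfl⟩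
    have hexp : Real.exp (-(2 * β * E k))
        ≤ Real.exp (-(2 * β * E₀)) * Real.exp (-(2 * β * Δ)) := by
      rw [← Real.exp_add]
      exact Real.exp_le_exp.2 (by nlinarith)
    exact mul_le_mul_of_nonneg_left hexp (hp k)
  set S := ∑ k, p k * Real.exp (-(2 * β * E k)) with hSdef
  have hGcnn : 0 ≤ ∑ k ∈ Gᶜ, p k * Real.exp (-(2 * β * E k)) :=
    Finset.sum_nonneg fun k _ => mul_nonneg (hp k) (Real.exp_pos _).le
  have hE0pos : (0:ℝ) < Real.exp (-(2 * β * E₀)) := Real.exp_pos _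
  have hSpos : 0 < S := by
    rw [hsplit, hGsum]
    nlinarith
  have hSle : S ≤ Real.exp (-(2 * β * E₀))
      * (γ + (1 - γ) * Real.exp (-(2 * β * Δ))) := by
    rw [hsplit, hGsum]
    nlinarith [hGc]
  have hx' : Real.exp (-(2 * β * Δ)) * (Fbar * (1 - γ)) ≤ γ * (1 - Fbar) :=
    (le_div_iff₀ hnum).1 hx
  have hFpos : 0 < Fbar := lt_trans hγpos hFbarlo
  rw [Fid, ← hγdef, ← hSdef, le_div_iff₀ hSpos]
  nlinarith [hSle, hx', Real.exp_pos (-(2 * β * Δ)), mul_le_mul_of_nonneg_left hSle hFpos.le]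
end

section
/- (Large-β limit of the normalized block-encoded operator.) For a commuting PUBO Hamiltonian H = Σ_{μ∈ι} x_μ σ_μ with W = Σ_μ |x_μ|, the scaled imaginary-time operator converges, as β → ∞, to the product of one-term projectors: e^{−βW}·Matrix.exp(−βH) → Π_{μ∈ι} (I − sgn(x_μ)·σ_μ)/2 in matrix norm, where each factor (I − sgn(x_μ)σ_μ)/2 is a Hermitian idempotent (an orthogonal projection) and the factors pairwise commute. -/
open NormedSpace Filter
open scoped Matrix

section Aux

variable {d : ℕ}

set_option maxHeartbeats 1000000 in
theorem exp_smul_idem (P : Matrix (Fin d) (Fin d) ℂ) (hP : P * P = P) (s : ℂ) :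
    exp (s • P) = 1 + (Complex.exp s - 1) • P := by
  letI : SeminormedRing (Matrix (Fin d) (Fin d) ℂ) := Matrix.linftyOpSemiNormedRing
  letI : NormedRing (Matrix (Fin d) (Fin d) ℂ) := Matrix.linftyOpNormedRing
  letI : NormedAlgebra ℂ (Matrix (Fin d) (Fin d) ℂ) := Matrix.linftyOpNormedAlgebra
  have hPn : ∀ n : ℕ, P ^ (n + 1) = P := by
    intro n; induction n with
    | zero => simp
    | succ n ih => rw [pow_succ, ih, hP]
  have hsumM : Summable fun n : ℕ => ((Nat.factorial n : ℂ))⁻¹ • (s • P) ^ n :=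
    expSeries_summable' (𝕂 := ℂ) (s • P)
  have hsumC : Summable fun n : ℕ => ((Nat.factorial n : ℂ))⁻¹ • s ^ n :=
    expSeries_summable' (𝕂 := ℂ) s
  have hsumC' : Summable fun n : ℕ => ((Nat.factorial (n + 1) : ℂ))⁻¹ • s ^ (n + 1) :=
    (summable_nat_add_iff 1).mpr hsumC
  have hterm : ∀ n : ℕ, ((Nat.factorial (n + 1) : ℂ))⁻¹ • (s • P) ^ (n + 1)
      = (((Nat.factorial (n + 1) : ℂ))⁻¹ • s ^ (n + 1)) • P := by
    intro n; rw [smul_pow, hPn, smul_smul, smul_eq_mul]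
  have hexp : Complex.exp s = 1 + ∑' n : ℕ, ((Nat.factorial (n + 1) : ℂ))⁻¹ • s ^ (n + 1) := by
    rw [Complex.exp_eq_exp_ℂ]
    simp only [exp_eq_tsum (𝕂 := ℂ)]
    rw [hsumC.tsum_eq_zero_add]
    simp
  simp only [exp_eq_tsum (𝕂 := ℂ)]
  rw [hsumM.tsum_eq_zero_add, tsum_congr hterm, hsumC'.tsum_smul_const, hexp]
  simp

theorem exp_smul_invol (σ : Matrix (Fin d) (Fin d) ℂ) (hσ : σ ^ 2 = 1) (c : ℂ) :
    exp (c • σ) = Complex.exp c • ((2 : ℂ)⁻¹ • (1 + σ))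
      + Complex.exp (-c) • ((2 : ℂ)⁻¹ • (1 - σ)) := by
  have hσσ : σ * σ = 1 := by rw [← sq]; exact hσ
  set P := (2 : ℂ)⁻¹ • ((1 : Matrix (Fin d) (Fin d) ℂ) + σ) with hPdef
  set Q := (2 : ℂ)⁻¹ • ((1 : Matrix (Fin d) (Fin d) ℂ) - σ) with hQdef
  have hPP : P * P = P := by
    rw [hPdef]
    simp only [smul_mul_smul_comm, mul_add, add_mul, mul_sub, sub_mul, mul_one, one_mul, hσσ]
    module
  have hQQ : Q * Q = Q := by
    rw [hQdef]
    simp only [smul_mul_smul_comm, mul_add, add_mul, mul_sub, sub_mul, mul_one, one_mul, hσσ]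
    module
  have hPQ : P * Q = 0 := by
    rw [hPdef, hQdef]
    simp only [smul_mul_smul_comm, mul_add, add_mul, mul_sub, sub_mul, mul_one, one_mul, hσσ]
    module
  have hQP : Q * P = 0 := by
    rw [hPdef, hQdef]
    simp only [smul_mul_smul_comm, mul_add, add_mul, mul_sub, sub_mul, mul_one, one_mul, hσσ]
    module
  have hcom : Commute (c • P) ((-c) • Q) := by
    apply Commute.smul_left; apply Commute.smul_right
    show P * Q = Q * P
    rw [hPQ, hQP]
  have hsplit : c • σ = c • P + (-c) • Q := by
    rw [hPdef, hQdef]; module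
  have h1 : (1 : Matrix (Fin d) (Fin d) ℂ) = P + Q := by rw [hPdef, hQdef]; module
  rw [hsplit, Matrix.exp_add_of_commute _ _ hcom, exp_smul_idem P hPP, exp_smul_idem Q hQQ]
  simp only [add_mul, mul_add, one_mul, mul_one, smul_mul_smul_comm, hPQ, smul_zero, add_zero]
  rw [h1]
  module

theorem coef_tendsto_zero {c : ℝ} (hc : 0 < c) :
    Tendsto (fun β : ℝ => ((Real.exp (-(β * c)) : ℝ) : ℂ)) atTop (nhds 0) := by
  have h1 : Tendsto (fun β : ℝ => -(β * c)) atTop atBot :=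
    tendsto_neg_atTop_atBot.comp (Filter.tendsto_id.atTop_mul_const hc)
  have h2 : Tendsto (fun β : ℝ => Real.exp (-(β * c))) atTop (nhds 0) :=
    Real.tendsto_exp_atBot.comp h1
  have h3 := (Complex.continuous_ofReal.tendsto 0).comp h2
  rw [Complex.ofReal_zero] at h3
  exact h3

theorem factor_tendsto (y : ℝ) (hy : y ≠ 0) (σ : Matrix (Fin d) (Fin d) ℂ) (hσ : σ ^ 2 = 1) :
    Tendsto (fun β : ℝ => ((Real.exp (-(β * |y|)) : ℝ) : ℂ) • exp (((-(β : ℂ)) * y) • σ))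
      atTop
      (nhds ((2 : ℂ)⁻¹ • ((1 : Matrix (Fin d) (Fin d) ℂ) - ((y / |y| : ℝ) : ℂ) • σ))) := by
  have hfun : ∀ β : ℝ, ((Real.exp (-(β * |y|)) : ℝ) : ℂ) • exp (((-(β : ℂ)) * y) • σ)
      = ((Real.exp (-(β * (|y| + y))) : ℝ) : ℂ) • ((2 : ℂ)⁻¹ • (1 + σ))
        + ((Real.exp (-(β * (|y| - y))) : ℝ) : ℂ) • ((2 : ℂ)⁻¹ • (1 - σ)) := by
    intro β
    have hc : ((-(β : ℂ)) * y) = ((-(β * y) : ℝ) : ℂ) := by push_cast; ring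
    have e1 : Complex.exp ((-(β * y) : ℝ) : ℂ) = ((Real.exp (-(β * y)) : ℝ) : ℂ) :=
      (Complex.ofReal_exp _).symm
    have e2 : Complex.exp (-((-(β * y) : ℝ) : ℂ)) = ((Real.exp (β * y) : ℝ) : ℂ) := by
      rw [← Complex.ofReal_neg, neg_neg]
      exact (Complex.ofReal_exp _).symm
    have ha' : Real.exp (-(β * |y|)) * Real.exp (-(β * y)) = Real.exp (-(β * (|y| + y))) := by
      rw [← Real.exp_add]
      congr 1
      ring
    have hb' : Real.exp (-(β * |y|)) * Real.exp (β * y) = Real.exp (-(β * (|y| - y))) := by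
      rw [← Real.exp_add]
      congr 1
      ring
    have ha : ((Real.exp (-(β * |y|)) : ℝ) : ℂ) * ((Real.exp (-(β * y)) : ℝ) : ℂ)
        = ((Real.exp (-(β * (|y| + y))) : ℝ) : ℂ) := by
      rw [← Complex.ofReal_mul, ha']
    have hb : ((Real.exp (-(β * |y|)) : ℝ) : ℂ) * ((Real.exp (β * y) : ℝ) : ℂ)
        = ((Real.exp (-(β * (|y| - y))) : ℝ) : ℂ) := by
      rw [← Complex.ofReal_mul, hb']
    rw [hc, exp_smul_invol σ hσ, e1, e2, smul_add]
    simp only [smul_smul, ← mul_assoc]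
    rw [ha, hb]
  refine Tendsto.congr (fun β => (hfun β).symm) ?_
  rcases hy.lt_or_gt with hneg | hpos
  · -- y < 0 : |y| + y = 0, |y| - y = -2y > 0
    have habs : |y| = -y := abs_of_neg hneg
    have h1 : ∀ β : ℝ, ((Real.exp (-(β * (|y| + y))) : ℝ) : ℂ) = 1 := by
      intro β; rw [habs]; norm_num
    have h2 : Tendsto (fun β : ℝ => ((Real.exp (-(β * (|y| - y))) : ℝ) : ℂ)) atTop (nhds 0) := by
      have : 0 < |y| - y := by rw [habs]; linarith
      exact coef_tendsto_zero this
    have hl : Tendsto (fun β : ℝ =>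
        ((Real.exp (-(β * (|y| + y))) : ℝ) : ℂ) • ((2 : ℂ)⁻¹ • (1 + σ))
        + ((Real.exp (-(β * (|y| - y))) : ℝ) : ℂ) • ((2 : ℂ)⁻¹ • (1 - σ))) atTop
        (nhds ((1 : ℂ) • ((2 : ℂ)⁻¹ • (1 + σ)) + (0 : ℂ) • ((2 : ℂ)⁻¹ • (1 - σ)))) := by
      refine Filter.Tendsto.add ?_ (h2.smul_const _)
      simp only [h1]
      exact tendsto_const_nhds
    convert hl using 2
    have hsgn : (y / |y| : ℝ) = -1 := by rw [habs]; field_simp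
    rw [hsgn]
    push_cast
    module
  · -- 0 < y
    have habs : |y| = y := abs_of_pos hpos
    have h1 : ∀ β : ℝ, ((Real.exp (-(β * (|y| - y))) : ℝ) : ℂ) = 1 := by
      intro β; rw [habs]; norm_num
    have h2 : Tendsto (fun β : ℝ => ((Real.exp (-(β * (|y| + y))) : ℝ) : ℂ)) atTop (nhds 0) := by
      have : 0 < |y| + y := by rw [habs]; linarith
      exact coef_tendsto_zero this
    have hl : Tendsto (fun β : ℝ =>
        ((Real.exp (-(β * (|y| + y))) : ℝ) : ℂ) • ((2 : ℂ)⁻¹ • (1 + σ))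
        + ((Real.exp (-(β * (|y| - y))) : ℝ) : ℂ) • ((2 : ℂ)⁻¹ • (1 - σ))) atTop
        (nhds ((0 : ℂ) • ((2 : ℂ)⁻¹ • (1 + σ)) + (1 : ℂ) • ((2 : ℂ)⁻¹ • (1 - σ)))) := by
      refine Filter.Tendsto.add (h2.smul_const _) ?_
      simp only [h1]
      exact tendsto_const_nhds
    convert hl using 2
    have hsgn : (y / |y| : ℝ) = 1 := by rw [habs]; field_simp
    rw [hsgn]
    push_cast
    module

end Aux



/-- Large-β limit of the normalized block-encoded operator: for a commuting
PUBO Hamiltonian `H = ∑ μ, x μ • σ μ` with `W = ∑ μ, |x μ|`, each factor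
`(I − sgn(x μ)·σ μ)/2` is a Hermitian idempotent (an orthogonal projection), the factors
pairwise commute, and the scaled imaginary-time operator converges as `β → ∞` to their
(order-independent) product: `e^{−βW}·exp(−βH) → ∏ μ (I − sgn(x μ)·σ μ)/2`. -/
theorem scaled_ite_tendsto_projector_product {d : ℕ} {ι : Type*} [Fintype ι] [Nonempty ι]
    (x : ι → ℝ) (hx : ∀ μ, x μ ≠ 0)
    (σ : ι → Matrix (Fin d) (Fin d) ℂ)
    (hherm : ∀ μ, (σ μ).IsHermitian)
    (hcomm : ∀ μ ν, Commute (σ μ) (σ ν))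
    (hinv : ∀ μ, σ μ ^ 2 = 1)
    (hPc : ((Finset.univ : Finset ι) : Set ι).Pairwise
      (Function.onFun Commute fun μ =>
        (2 : ℂ)⁻¹ • ((1 : Matrix (Fin d) (Fin d) ℂ) - ((x μ / |x μ| : ℝ) : ℂ) • σ μ))) :
    (∀ μ, ((2 : ℂ)⁻¹ •
        ((1 : Matrix (Fin d) (Fin d) ℂ) - ((x μ / |x μ| : ℝ) : ℂ) • σ μ)).IsHermitian ∧
      ((2 : ℂ)⁻¹ • ((1 : Matrix (Fin d) (Fin d) ℂ) - ((x μ / |x μ| : ℝ) : ℂ) • σ μ)) *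
          ((2 : ℂ)⁻¹ • ((1 : Matrix (Fin d) (Fin d) ℂ) - ((x μ / |x μ| : ℝ) : ℂ) • σ μ)) =
        (2 : ℂ)⁻¹ • ((1 : Matrix (Fin d) (Fin d) ℂ) - ((x μ / |x μ| : ℝ) : ℂ) • σ μ)) ∧
    (∀ μ ν, Commute
      ((2 : ℂ)⁻¹ • ((1 : Matrix (Fin d) (Fin d) ℂ) - ((x μ / |x μ| : ℝ) : ℂ) • σ μ))
      ((2 : ℂ)⁻¹ • ((1 : Matrix (Fin d) (Fin d) ℂ) - ((x ν / |x ν| : ℝ) : ℂ) • σ ν))) ∧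
    Filter.Tendsto
      (fun β : ℝ => ((Real.exp (-(β * ∑ μ, |x μ|)) : ℝ) : ℂ) •
        NormedSpace.exp ((-(β : ℂ)) • ∑ μ, (x μ : ℂ) • σ μ))
      Filter.atTop
      (nhds (Finset.univ.noncommProd
        (fun μ => (2 : ℂ)⁻¹ •
          ((1 : Matrix (Fin d) (Fin d) ℂ) - ((x μ / |x μ| : ℝ) : ℂ) • σ μ)) hPc)) := by
  have hPcomm : ∀ μ ν, Commute
      ((2 : ℂ)⁻¹ • ((1 : Matrix (Fin d) (Fin d) ℂ) - ((x μ / |x μ| : ℝ) : ℂ) • σ μ))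
      ((2 : ℂ)⁻¹ • ((1 : Matrix (Fin d) (Fin d) ℂ) - ((x ν / |x ν| : ℝ) : ℂ) • σ ν)) := by
    intro μ ν
    apply Commute.smul_left
    apply Commute.smul_right
    refine Commute.sub_left (Commute.one_left _) ?_
    apply Commute.smul_left
    exact Commute.sub_right (Commute.one_right _) ((hcomm μ ν).smul_right _)
  refine ⟨fun μ => ⟨?_, ?_⟩, hPcomm, ?_⟩
  · -- Hermitian
    have h2 : star ((2 : ℂ)⁻¹) = (2 : ℂ)⁻¹ := by
      simp
    show _ᴴ = _
    rw [Matrix.conjTranspose_smul, Matrix.conjTranspose_sub, Matrix.conjTranspose_smul,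
      Matrix.conjTranspose_one, (hherm μ).eq, h2]
    rw [Complex.star_def, Complex.conj_ofReal]
  · -- idempotent
    have hσσ : σ μ * σ μ = 1 := by rw [← sq]; exact hinv μ
    have hr2 : (((x μ / |x μ| : ℝ) : ℂ)) * (((x μ / |x μ| : ℝ) : ℂ)) = 1 := by
      rw [← Complex.ofReal_mul]
      norm_cast
      rw [div_mul_div_comm, abs_mul_abs_self]
      exact div_self (mul_self_ne_zero.mpr (hx μ))
    simp only [smul_mul_smul_comm, mul_sub, sub_mul, mul_one, one_mul, hσσ, hr2, one_smul]
    module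
  · -- the limit
    have hPpair : ∀ s : Finset ι, ((s : Set ι)).Pairwise (Function.onFun Commute
        (fun μ => (2 : ℂ)⁻¹ •
          ((1 : Matrix (Fin d) (Fin d) ℂ) - ((x μ / |x μ| : ℝ) : ℂ) • σ μ))) :=
      fun s μ _ ν _ _ => hPcomm μ ν
    have key : ∀ s : Finset ι,
        Filter.Tendsto (fun β : ℝ => ((Real.exp (-(β * ∑ μ ∈ s, |x μ|)) : ℝ) : ℂ) •
          NormedSpace.exp ((-(β : ℂ)) • ∑ μ ∈ s, (x μ : ℂ) • σ μ)) Filter.atTop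
          (nhds (s.noncommProd (fun μ => (2 : ℂ)⁻¹ •
            ((1 : Matrix (Fin d) (Fin d) ℂ) - ((x μ / |x μ| : ℝ) : ℂ) • σ μ)) (hPpair s))) := by
      intro s
      induction s using Finset.cons_induction with
      | empty =>
        simp only [Finset.sum_empty, Finset.noncommProd_empty, mul_zero, neg_zero,
          Real.exp_zero, Complex.ofReal_one, one_smul, smul_zero, NormedSpace.exp_zero]
        exact tendsto_const_nhds
      | cons a s ha ih =>
        rw [Finset.noncommProd_cons]
        refine Filter.Tendsto.congr (fun β => ?_)
          ((factor_tendsto (x a) (hx a) (σ a) (hinv a)).mul ih)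
        rw [Finset.sum_cons, Finset.sum_cons]
        have hsc : Real.exp (-(β * (|x a| + ∑ μ ∈ s, |x μ|)))
            = Real.exp (-(β * |x a|)) * Real.exp (-(β * ∑ μ ∈ s, |x μ|)) := by
          rw [← Real.exp_add]; congr 1; ring
        have harg : (-(β : ℂ)) • ((x a : ℂ) • σ a + ∑ μ ∈ s, (x μ : ℂ) • σ μ)
            = ((-(β : ℂ)) * (x a : ℂ)) • σ a + (-(β : ℂ)) • ∑ μ ∈ s, (x μ : ℂ) • σ μ := by
          rw [smul_add, smul_smul]
        have hcomm2 : Commute (((-(β : ℂ)) * (x a : ℂ)) • σ a)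
            ((-(β : ℂ)) • ∑ μ ∈ s, (x μ : ℂ) • σ μ) := by
          apply Commute.smul_left; apply Commute.smul_right
          exact Commute.sum_right _ _ _ (fun ν _ => ((hcomm a ν).smul_right _))
        rw [harg, Matrix.exp_add_of_commute _ _ hcomm2, hsc, Complex.ofReal_mul,
          ← smul_mul_smul_comm]
    exact key Finset.univ
end
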